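/- Let μ be a finite complex measure on the real line and F_μ(t) = ∫ e^{itx} dμ(x) its Fourier transform. Then lim_{T→∞} (1/T) ∫_0^T |F_μ(t)|² dt = Σ_{E∈ℝ} |μ({E})|², where the sum runs over the (at most countably many) atoms of μ. -/

import Mathlib

open MeasureTheory Filter

open Set

open scoped ComplexConjugate

private lemma wiener_norm_exp (a b : ℝ) : ‖Complex.exp (Complex.I * a * b)‖ = 1 := by
  rw [Complex.norm_exp]
  have : (Complex.I * a * b).re = 0 := by simp [Complex.mul_re]
  rw [this, Real.exp_zero]

private lemma wiener_exp_int (s : ℝ) (hs : s ≠ 0) (T : ℝ) :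
    (∫ t in (0:ℝ)..T, Complex.exp (Complex.I * t * s))
      = (Complex.exp (Complex.I * s * T) - 1) / (Complex.I * s) := by
  have hc : (Complex.I * s : ℂ) ≠ 0 :=
    mul_ne_zero Complex.I_ne_zero (Complex.ofReal_ne_zero.mpr hs)
  have h1 : ∀ t : ℝ, Complex.I * (t:ℂ) * (s:ℂ) = (Complex.I * s) * (t:ℂ) := fun t => by ring
  simp_rw [h1]
  rw [integral_exp_mul_complex hc]
  simp [Complex.exp_zero]

private lemma wiener_Ioc_eq (T : ℝ) (hT : 0 < T) (s : ℝ) :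
    (∫ t in Set.Ioc (0:ℝ) T, Complex.exp (Complex.I * t * s) ∂volume)
      = ∫ t in (0:ℝ)..T, Complex.exp (Complex.I * t * s) :=
  (intervalIntegral.integral_of_le hT.le).symm

private lemma wiener_Ioc_zero (T : ℝ) (hT : 0 < T) :
    (∫ t in Set.Ioc (0:ℝ) T, Complex.exp (Complex.I * t * ((0:ℝ):ℂ)) ∂volume) = (T : ℂ) := by
  simp only [Complex.ofReal_zero, mul_zero, Complex.exp_zero]
  rw [setIntegral_const, Real.volume_real_Ioc_of_le hT.le, sub_zero]
  simp

private lemma wiener_t1 (ρ : Measure ℝ) [IsFiniteMeasure ρ] (f : ℝ → ℂ) (F : ℝ → ℂ)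
    (hFrep : ∀ t : ℝ, F t = ∫ x : ℝ, Complex.exp (Complex.I * t * x) * f x ∂ρ) :
    ∀ t : ℝ, ((‖F t‖ ^ 2 : ℝ) : ℂ)
      = ∫ p : ℝ × ℝ, Complex.exp (Complex.I * t * ((p.1 - p.2 : ℝ) : ℂ))
          * (f p.1 * conj (f p.2)) ∂(ρ.prod ρ) := by
  intro t
  have h1 : ((‖F t‖ ^ 2 : ℝ) : ℂ) = F t * conj (F t) := by
    rw [Complex.mul_conj]
    norm_cast
    rw [Complex.normSq_eq_norm_sq]
  rw [h1, hFrep, ← integral_conj, ← integral_prod_mul]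
  apply integral_congr_ae
  refine ae_of_all _ fun p => ?_
  have hc : conj (Complex.exp (Complex.I * t * p.2) * f p.2)
      = Complex.exp (-(Complex.I * t * p.2)) * conj (f p.2) := by
    rw [map_mul, ← Complex.exp_conj]
    congr 1
    simp [map_mul, Complex.conj_ofReal]
  show Complex.exp (Complex.I * t * p.1) * f p.1
      * conj (Complex.exp (Complex.I * t * p.2) * f p.2)
    = Complex.exp (Complex.I * t * ((p.1 - p.2 : ℝ) : ℂ)) * (f p.1 * conj (f p.2))
  rw [hc]
  rw [show Complex.I * t * ((p.1 - p.2 : ℝ) : ℂ)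
      = Complex.I * t * p.1 + -(Complex.I * t * p.2) by push_cast; ring]
  rw [Complex.exp_add]
  ring

private lemma wiener_t2 (ρ : Measure ℝ) [IsFiniteMeasure ρ] (f : ℝ → ℂ)
    (g : ℝ × ℝ → ℂ) (hgm : Measurable g) (hgi : Integrable g (ρ.prod ρ)) :
    ∀ T : ℝ, Integrable
      (Function.uncurry fun (t : ℝ) (p : ℝ × ℝ) =>
        Complex.exp (Complex.I * t * ((p.1 - p.2 : ℝ) : ℂ)) * g p)
      ((volume.restrict (Set.Ioc 0 T)).prod (ρ.prod ρ)) := by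
  intro T
  have hm : Measurable (Function.uncurry fun (t : ℝ) (p : ℝ × ℝ) =>
      Complex.exp (Complex.I * t * ((p.1 - p.2 : ℝ) : ℂ)) * g p) := by
    apply Measurable.mul
    · apply Complex.measurable_exp.comp
      apply Measurable.mul
      · exact measurable_const.mul (Complex.measurable_ofReal.comp measurable_fst)
      · exact Complex.measurable_ofReal.comp
          ((measurable_fst.comp measurable_snd).sub (measurable_snd.comp measurable_snd))
    · exact hgm.comp measurable_snd
  have hbase : Integrable (fun z : ℝ × (ℝ × ℝ) => (1 : ℝ) * ‖g z.2‖)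
      ((volume.restrict (Set.Ioc 0 T)).prod (ρ.prod ρ)) := by
    have : IsFiniteMeasure (volume.restrict (Set.Ioc (0:ℝ) T)) := by
      constructor
      rw [Measure.restrict_apply_univ, Real.volume_Ioc]
      exact ENNReal.ofReal_lt_top
    exact (integrable_const (1:ℝ)).mul_prod hgi.norm
  refine hbase.mono' hm.aestronglyMeasurable (ae_of_all _ fun z => ?_)
  rw [Function.uncurry]
  simp only [norm_mul, one_mul]
  rw [wiener_norm_exp z.1 (z.2.1 - z.2.2), one_mul]

private lemma wiener_t3 (ρ : Measure ℝ) [IsFiniteMeasure ρ] (F : ℝ → ℂ)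
    (g : ℝ × ℝ → ℂ)
    (hFt : ∀ t : ℝ, ((‖F t‖ ^ 2 : ℝ) : ℂ)
      = ∫ p : ℝ × ℝ, Complex.exp (Complex.I * t * ((p.1 - p.2 : ℝ) : ℂ)) * g p ∂(ρ.prod ρ))
    (hint : ∀ T : ℝ, Integrable
      (Function.uncurry fun (t : ℝ) (p : ℝ × ℝ) =>
        Complex.exp (Complex.I * t * ((p.1 - p.2 : ℝ) : ℂ)) * g p)
      ((volume.restrict (Set.Ioc 0 T)).prod (ρ.prod ρ))) :
    ∀ T : ℝ, 0 < T →
      (((1 / T) * ∫ t in (0:ℝ)..T, ‖F t‖ ^ 2 : ℝ) : ℂ)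
      = ∫ p, ((((1 : ℝ)/T : ℝ) : ℂ) * (∫ t in Set.Ioc (0:ℝ) T,
          Complex.exp (Complex.I * t * ((p.1 - p.2 : ℝ) : ℂ)) ∂volume) * g p) ∂(ρ.prod ρ) := by
  intro T hT
  rw [Complex.ofReal_mul, ← intervalIntegral.integral_ofReal (f := fun t => ‖F t‖ ^ 2)]
  have h2 : (∫ t in (0:ℝ)..T, ((‖F t‖ ^ 2 : ℝ) : ℂ))
      = ∫ t in Set.Ioc (0:ℝ) T, (∫ p : ℝ × ℝ,
          Complex.exp (Complex.I * t * ((p.1 - p.2 : ℝ) : ℂ)) * g p ∂(ρ.prod ρ)) ∂volume := by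
    rw [intervalIntegral.integral_of_le hT.le]
    exact setIntegral_congr_fun measurableSet_Ioc fun t _ => hFt t
  rw [h2]
  rw [integral_integral_swap (hint T)]
  have h3 : ∀ p : ℝ × ℝ, (∫ t in Set.Ioc (0:ℝ) T,
        Complex.exp (Complex.I * t * ((p.1 - p.2 : ℝ) : ℂ)) * g p ∂volume)
      = (∫ t in Set.Ioc (0:ℝ) T,
          Complex.exp (Complex.I * t * ((p.1 - p.2 : ℝ) : ℂ)) ∂volume) * g p := by
    intro p
    exact integral_mul_const _ _
  rw [integral_congr_ae (ae_of_all _ h3)]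
  rw [← integral_const_mul]
  apply integral_congr_ae
  refine ae_of_all _ fun p => ?_
  push_cast
  ring

private lemma wiener_t4 (ρ : Measure ℝ) [IsFiniteMeasure ρ] (g : ℝ × ℝ → ℂ) :
    (∀ p : ℝ × ℝ, Tendsto (fun T : ℝ =>
        (((1 : ℝ)/T : ℝ) : ℂ) * (∫ t in Set.Ioc (0:ℝ) T,
          Complex.exp (Complex.I * t * ((p.1 - p.2 : ℝ) : ℂ)) ∂volume) * g p)
      atTop (nhds (if p.1 = p.2 then g p else 0)))
    ∧ (∀ᶠ T in atTop, ∀ᵐ p ∂(ρ.prod ρ),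
        ‖(((1 : ℝ)/T : ℝ) : ℂ) * (∫ t in Set.Ioc (0:ℝ) T,
          Complex.exp (Complex.I * t * ((p.1 - p.2 : ℝ) : ℂ)) ∂volume) * g p‖ ≤ ‖g p‖) := by
  have hnorm1 : ∀ T : ℝ, 0 < T → ∀ s : ℝ,
      ‖∫ t in Set.Ioc (0:ℝ) T, Complex.exp (Complex.I * t * (s:ℂ)) ∂volume‖ ≤ T := by
    intro T hT s
    rw [wiener_Ioc_eq T hT s]
    have := intervalIntegral.norm_integral_le_of_norm_le_const
      (a := (0:ℝ)) (b := T) (C := 1)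
      (f := fun t => Complex.exp (Complex.I * t * (s:ℂ)))
      (fun x _ => le_of_eq (wiener_norm_exp x s))
    simpa [abs_of_pos hT] using this
  constructor
  · intro p
    by_cases hp : p.1 = p.2
    · have hs : p.1 - p.2 = (0:ℝ) := by rw [hp, sub_self]
      have hev : ∀ᶠ T in atTop, (((1 : ℝ)/T : ℝ) : ℂ) * (∫ t in Set.Ioc (0:ℝ) T,
          Complex.exp (Complex.I * t * ((p.1 - p.2 : ℝ) : ℂ)) ∂volume) * g p = g p := by
        filter_upwards [eventually_gt_atTop (0:ℝ)] with T hT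
        simp only [hs]
        rw [wiener_Ioc_zero T hT]
        rw [show (((1:ℝ)/T : ℝ) : ℂ) * (T:ℂ) = ((1/T * T : ℝ) : ℂ) by push_cast; ring]
        rw [one_div_mul_cancel hT.ne']
        simp
      simp only [if_pos hp]
      exact tendsto_const_nhds.congr' (by filter_upwards [hev] with T h using h.symm)
    · have hs : p.1 - p.2 ≠ 0 := sub_ne_zero.mpr hp
      simp only [if_neg hp]
      apply squeeze_zero_norm'
        (a := fun T => (2 * ‖g p‖ / (‖Complex.I‖ * ‖((p.1 - p.2 : ℝ):ℂ)‖)) * T⁻¹)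
      · filter_upwards [eventually_gt_atTop (0:ℝ)] with T hT
        simp only [norm_mul]
        rw [wiener_Ioc_eq T hT, wiener_exp_int _ hs]
        rw [norm_div]
        have hb : ‖Complex.exp (Complex.I * ((p.1-p.2:ℝ):ℂ) * (T:ℂ)) - 1‖ ≤ 2 := by
          refine (norm_sub_le _ _).trans ?_
          rw [wiener_norm_exp (p.1-p.2) T]
          norm_num
        have hpos : (0:ℝ) < ‖Complex.I * ((p.1 - p.2 : ℝ):ℂ)‖ := by
          refine norm_pos_iff.mpr ?_
          exact mul_ne_zero Complex.I_ne_zero (Complex.ofReal_ne_zero.mpr hs)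
        have h1T : ‖(((1:ℝ)/T : ℝ) : ℂ)‖ = T⁻¹ := by
          rw [Complex.norm_real, Real.norm_eq_abs, abs_of_pos (by positivity), one_div]
        rw [h1T]
        calc T⁻¹ * (‖Complex.exp (Complex.I * ((p.1-p.2:ℝ):ℂ) * (T:ℂ)) - 1‖
                / ‖Complex.I * ((p.1 - p.2 : ℝ):ℂ)‖) * ‖g p‖
            ≤ T⁻¹ * (2 / ‖Complex.I * ((p.1 - p.2 : ℝ):ℂ)‖) * ‖g p‖ := by
              gcongr
          _ = (2 * ‖g p‖ / (‖Complex.I‖ * ‖((p.1 - p.2 : ℝ):ℂ)‖)) * T⁻¹ := by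
              rw [norm_mul]; ring
      · simpa using tendsto_inv_atTop_zero.const_mul
          (2 * ‖g p‖ / (‖Complex.I‖ * ‖((p.1 - p.2 : ℝ):ℂ)‖))
  · filter_upwards [eventually_gt_atTop (0:ℝ)] with T hT
    refine ae_of_all _ fun p => ?_
    simp only [norm_mul]
    have h1T : ‖(((1:ℝ)/T : ℝ) : ℂ)‖ = T⁻¹ := by
      rw [Complex.norm_real, Real.norm_eq_abs, abs_of_pos (by positivity), one_div]
    rw [h1T]
    calc T⁻¹ * ‖∫ t in Set.Ioc (0:ℝ) T,
            Complex.exp (Complex.I * t * ((p.1 - p.2 : ℝ):ℂ)) ∂volume‖ * ‖g p‖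
        ≤ T⁻¹ * T * ‖g p‖ := by
          gcongr
          exact hnorm1 T hT _
      _ = ‖g p‖ := by rw [inv_mul_cancel₀ hT.ne']; ring

private lemma wiener_t5 (ρ : Measure ℝ) [IsFiniteMeasure ρ] (g : ℝ × ℝ → ℂ)
    (hint : ∀ T : ℝ, Integrable
      (Function.uncurry fun (t : ℝ) (p : ℝ × ℝ) =>
        Complex.exp (Complex.I * t * ((p.1 - p.2 : ℝ) : ℂ)) * g p)
      ((volume.restrict (Set.Ioc 0 T)).prod (ρ.prod ρ))) :
    ∀ T : ℝ, AEStronglyMeasurable (fun p =>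
      (((1 : ℝ)/T : ℝ) : ℂ) * (∫ t in Set.Ioc (0:ℝ) T,
        Complex.exp (Complex.I * t * ((p.1 - p.2 : ℝ) : ℂ)) ∂volume) * g p) (ρ.prod ρ) := by
  intro T
  have h1 : AEStronglyMeasurable (fun p : ℝ × ℝ => ∫ t in Set.Ioc (0:ℝ) T,
      Complex.exp (Complex.I * t * ((p.1 - p.2 : ℝ) : ℂ)) * g p ∂volume) (ρ.prod ρ) :=
    (hint T).integral_prod_right.aestronglyMeasurable
  have h2 : (fun p : ℝ × ℝ => ∫ t in Set.Ioc (0:ℝ) T,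
        Complex.exp (Complex.I * t * ((p.1 - p.2 : ℝ) : ℂ)) * g p ∂volume)
      = fun p => (∫ t in Set.Ioc (0:ℝ) T,
        Complex.exp (Complex.I * t * ((p.1 - p.2 : ℝ) : ℂ)) ∂volume) * g p := by
    funext p; exact integral_mul_const _ _
  rw [h2] at h1
  have := h1.const_mul ((((1 : ℝ)/T : ℝ) : ℂ))
  refine this.congr (ae_of_all _ fun p => ?_)
  ring

private lemma wiener_t6 (ρ : Measure ℝ) [IsFiniteMeasure ρ] (f : ℝ → ℂ)
    (g : ℝ × ℝ → ℂ) (hgdef : g = fun p => f p.1 * conj (f p.2))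
    (hgi : Integrable g (ρ.prod ρ)) :
    (∫ p, (if p.1 = p.2 then g p else 0) ∂(ρ.prod ρ))
      = ((∑' E : ℝ, ‖(ρ {E}).toReal • f E‖ ^ 2 : ℝ) : ℂ) := by
  set D : Set (ℝ × ℝ) := {p | p.1 = p.2} with hD
  have hDm : MeasurableSet D := measurableSet_eq_fun measurable_fst measurable_snd
  have hLind : (fun p : ℝ × ℝ => if p.1 = p.2 then g p else 0) = D.indicator g := by
    funext p
    rw [Set.indicator_apply]
    rfl
  have hhi : Integrable (D.indicator g) (ρ.prod ρ) := hgi.indicator hDm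
  rw [hLind, integral_prod _ hhi]
  have hinner : ∀ x : ℝ, (∫ y, D.indicator g (x, y) ∂ρ)
      = (ρ {x}).toReal • ((‖f x‖ ^ 2 : ℝ) : ℂ) := by
    intro x
    have h1 : (fun y => D.indicator g (x, y))
        = ({x} : Set ℝ).indicator (fun y => f x * conj (f y)) := by
      funext y
      rw [Set.indicator_apply, Set.indicator_apply]
      simp only [hD, Set.mem_setOf_eq, Set.mem_singleton_iff, hgdef]
      by_cases h : x = y
      · simp [h]
      · rw [if_neg h, if_neg (fun hh : y = x => h hh.symm)]
    rw [h1, integral_indicator (measurableSet_singleton x), integral_singleton]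
    congr 1
    rw [Complex.mul_conj]
    norm_cast
    rw [Complex.normSq_eq_norm_sq]
  rw [integral_congr_ae (ae_of_all _ hinner)]
  have hqi : Integrable (fun x => (ρ {x}).toReal • ((‖f x‖ ^ 2 : ℝ) : ℂ)) ρ := by
    have := hhi.integral_prod_left
    exact this.congr (ae_of_all _ hinner)
  set A : Set ℝ := {x : ℝ | 0 < ρ {x}} with hA
  have hAc : A.Countable := by
    apply Measure.countable_meas_pos_of_disjoint_of_meas_iUnion_ne_top
      (As := fun x : ℝ => {x}) ρ (fun x => measurableSet_singleton x)
    · intro x y hxy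
      simp [Function.onFun, Set.disjoint_singleton, hxy]
    · exact measure_ne_top ρ _
  have hzero : ∀ x ∉ A, (ρ {x}).toReal • ((‖f x‖ ^ 2 : ℝ) : ℂ) = 0 := by
    intro x hx
    have : ρ {x} = 0 := by
      by_contra h
      exact hx (pos_iff_ne_zero.mpr h)
    rw [this]
    simp
  rw [← setIntegral_eq_integral_of_forall_compl_eq_zero hzero]
  rw [setIntegral_countable _ hAc hqi.integrableOn]; simp only [measureReal_def]
  have hsummand : ∀ a : A, (ρ {(a : ℝ)}).toReal • ((ρ {(a : ℝ)}).toReal • ((‖f a‖ ^ 2 : ℝ) : ℂ))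
      = ((‖(ρ {(a : ℝ)}).toReal • f (a : ℝ)‖ ^ 2 : ℝ) : ℂ) := by
    intro a
    rw [norm_smul, Real.norm_eq_abs, abs_of_nonneg ENNReal.toReal_nonneg, mul_pow,
      Complex.ofReal_mul, Complex.real_smul, Complex.real_smul, Complex.ofReal_pow]
    push_cast
    ring
  rw [tsum_congr hsummand]
  rw [← Complex.ofReal_tsum]
  norm_cast
  refine tsum_subtype_eq_of_support_subset
    (s := A) (f := fun E : ℝ => ‖(ρ {E}).toReal • f E‖ ^ 2) ?_
  intro x hx
  simp only [Function.mem_support, ne_eq] at hx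
  by_contra hxA
  apply hx
  have : ρ {x} = 0 := by
    by_contra h
    exact hxA (pos_iff_ne_zero.mpr h)
  rw [this]
  simp

lemma wiener_aux (ρ : Measure ℝ) [IsFiniteMeasure ρ] (f : ℝ → ℂ)
    (hfm : Measurable f) (hfi : Integrable f ρ) (F : ℝ → ℂ)
    (hFrep : ∀ t : ℝ, F t = ∫ x : ℝ, Complex.exp (Complex.I * t * x) * f x ∂ρ) :
    Tendsto (fun T : ℝ => (1 / T) * ∫ t in (0:ℝ)..T, ‖F t‖ ^ 2)
      atTop (nhds (∑' E : ℝ, ‖(ρ {E}).toReal • f E‖ ^ 2)) := by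
  have hfc : Integrable (fun x => conj (f x)) ρ := by
    refine hfi.norm.mono' (Complex.continuous_conj.measurable.comp hfm).aestronglyMeasurable ?_
    exact ae_of_all _ fun x => by simp
  have hgm : Measurable fun p : ℝ × ℝ => f p.1 * conj (f p.2) :=
    (hfm.comp measurable_fst).mul
      ((Complex.continuous_conj.measurable.comp hfm).comp measurable_snd)
  have hgi : Integrable (fun p : ℝ × ℝ => f p.1 * conj (f p.2)) (ρ.prod ρ) := hfi.mul_prod hfc
  have hFt := wiener_t1 ρ f F hFrep
  have hint := wiener_t2 ρ f _ hgm hgi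
  have key := wiener_t3 ρ F _ hFt hint
  obtain ⟨hlim, hbd⟩ := wiener_t4 ρ (fun p : ℝ × ℝ => f p.1 * conj (f p.2))
  have hmeas := wiener_t5 ρ _ hint
  have htendC : Tendsto (fun T : ℝ => ∫ p, ((((1 : ℝ)/T : ℝ) : ℂ) * (∫ t in Set.Ioc (0:ℝ) T,
        Complex.exp (Complex.I * t * ((p.1 - p.2 : ℝ) : ℂ)) ∂volume)
          * (f p.1 * conj (f p.2))) ∂(ρ.prod ρ)) atTop
      (nhds (∫ p : ℝ × ℝ, (if p.1 = p.2 then f p.1 * conj (f p.2) else 0) ∂(ρ.prod ρ))) :=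
    tendsto_integral_filter_of_dominated_convergence
      (fun p : ℝ × ℝ => ‖f p.1 * conj (f p.2)‖)
      (Eventually.of_forall hmeas) hbd hgi.norm (ae_of_all _ hlim)
  rw [wiener_t6 ρ f _ rfl hgi] at htendC
  have hre := (Complex.continuous_re.tendsto _).comp htendC
  simp only [Complex.ofReal_re, Function.comp_def] at hre
  refine hre.congr' ?_
  filter_upwards [eventually_gt_atTop (0:ℝ)] with T hT
  rw [← key T hT, Complex.ofReal_re]

private lemma wiener_rn_int (ν ρ : Measure ℝ) [IsFiniteMeasure ν] [IsFiniteMeasure ρ]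
    (hac : ν ≪ ρ) (t : ℝ) :
    ∫ x, ((ν.rnDeriv ρ x).toReal : ℂ) * Complex.exp (Complex.I * t * x) ∂ρ
      = ∫ x, Complex.exp (Complex.I * t * x) ∂ν := by
  rw [← integral_rnDeriv_smul hac (f := fun x : ℝ => Complex.exp (Complex.I * t * x))]
  simp only [Complex.real_smul]

private lemma wiener_rn_intble (ν ρ : Measure ℝ) [IsFiniteMeasure ν] (t : ℝ) :
    Integrable (fun x => ((ν.rnDeriv ρ x).toReal : ℂ) * Complex.exp (Complex.I * t * x)) ρ := by
  refine (Measure.integrable_toReal_rnDeriv (μ := ν) (ν := ρ)).mono' ?_ (ae_of_all _ fun x => ?_)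
  · exact ((Complex.measurable_ofReal.comp
      (Measure.measurable_rnDeriv ν ρ).ennreal_toReal).mul
        (Complex.measurable_exp.comp
          (measurable_const.mul Complex.measurable_ofReal))).aestronglyMeasurable
  · rw [norm_mul, wiener_norm_exp t x, mul_one, Complex.norm_real, Real.norm_eq_abs,
      abs_of_nonneg ENNReal.toReal_nonneg]

/-- Wiener criterion: For a finite complex measure
`μ = μ₁ - μ₂ + i·μ₃ - i·μ₄` on ℝ with Fourier transform `F_μ(t) = ∫ e^{itx} dμ(x)`,
the Cesàro time averages of `|F_μ(t)|²` converge to the sum of the squared moduli of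
the atoms of `μ`:  `lim_{T→∞} (1/T) ∫₀^T |F_μ(t)|² dt = Σ_{E∈ℝ} |μ({E})|²`. -/
theorem wiener_criterion
    (μ₁ μ₂ μ₃ μ₄ : Measure ℝ)
    [IsFiniteMeasure μ₁] [IsFiniteMeasure μ₂] [IsFiniteMeasure μ₃] [IsFiniteMeasure μ₄]
    (μ : Set ℝ → ℂ)
    (hμ : ∀ s : Set ℝ,
      μ s = ((μ₁ s).toReal : ℂ) - ((μ₂ s).toReal : ℂ)
          + Complex.I * ((μ₃ s).toReal : ℂ) - Complex.I * ((μ₄ s).toReal : ℂ))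
    (F : ℝ → ℂ)
    (hF : ∀ t : ℝ,
      F t = (∫ x : ℝ, Complex.exp (Complex.I * t * x) ∂μ₁)
          - (∫ x : ℝ, Complex.exp (Complex.I * t * x) ∂μ₂)
          + Complex.I * (∫ x : ℝ, Complex.exp (Complex.I * t * x) ∂μ₃)
          - Complex.I * (∫ x : ℝ, Complex.exp (Complex.I * t * x) ∂μ₄)) :
    Tendsto (fun T : ℝ => (1 / T) * ∫ t in (0:ℝ)..T, ‖F t‖ ^ 2)
      atTop (nhds (∑' E : ℝ, ‖μ {E}‖ ^ 2)) := by
  classical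
  set ρ : Measure ℝ := μ₁ + μ₂ + μ₃ + μ₄ with hρdef
  haveI hρfin : IsFiniteMeasure ρ := by rw [hρdef]; infer_instance
  have hacs : ∀ s : Set ℝ, ρ s = 0 → μ₁ s = 0 ∧ μ₂ s = 0 ∧ μ₃ s = 0 ∧ μ₄ s = 0 := by
    intro s hs
    rw [hρdef, Measure.add_apply, Measure.add_apply, Measure.add_apply] at hs
    obtain ⟨h123, h4⟩ := add_eq_zero.mp hs
    obtain ⟨h12, h3⟩ := add_eq_zero.mp h123
    obtain ⟨h1, h2⟩ := add_eq_zero.mp h12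
    exact ⟨h1, h2, h3, h4⟩
  have hac1 : μ₁ ≪ ρ := Measure.AbsolutelyContinuous.mk fun s _ hs => (hacs s hs).1
  have hac2 : μ₂ ≪ ρ := Measure.AbsolutelyContinuous.mk fun s _ hs => (hacs s hs).2.1
  have hac3 : μ₃ ≪ ρ := Measure.AbsolutelyContinuous.mk fun s _ hs => (hacs s hs).2.2.1
  have hac4 : μ₄ ≪ ρ := Measure.AbsolutelyContinuous.mk fun s _ hs => (hacs s hs).2.2.2
  set f : ℝ → ℂ := fun x =>
      ((μ₁.rnDeriv ρ x).toReal : ℂ) - ((μ₂.rnDeriv ρ x).toReal : ℂ)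
      + Complex.I * ((μ₃.rnDeriv ρ x).toReal : ℂ)
      - Complex.I * ((μ₄.rnDeriv ρ x).toReal : ℂ) with hfdef
  have hmre : ∀ ν : Measure ℝ, Measurable fun x : ℝ => ((ν.rnDeriv ρ x).toReal : ℂ) :=
    fun ν => Complex.measurable_ofReal.comp (Measure.measurable_rnDeriv ν ρ).ennreal_toReal
  have hfm : Measurable f := by
    rw [hfdef]
    exact (((hmre μ₁).sub (hmre μ₂)).add (measurable_const.mul (hmre μ₃))).sub
      (measurable_const.mul (hmre μ₄))
  have hire : ∀ (ν : Measure ℝ) [IsFiniteMeasure ν],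
      Integrable (fun x : ℝ => ((ν.rnDeriv ρ x).toReal : ℂ)) ρ := by
    intro ν _
    exact Measure.integrable_toReal_rnDeriv.ofReal
  have hfi : Integrable f ρ := by
    rw [hfdef]
    exact (((hire μ₁).sub (hire μ₂)).add ((hire μ₃).const_mul _)).sub ((hire μ₄).const_mul _)
  have hFrep : ∀ t : ℝ, F t = ∫ x : ℝ, Complex.exp (Complex.I * t * x) * f x ∂ρ := by
    intro t
    have e1 : (fun x : ℝ => Complex.exp (Complex.I * t * x) * f x)
        = fun x : ℝ =>
          (((μ₁.rnDeriv ρ x).toReal : ℂ) * Complex.exp (Complex.I * t * x)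
          - ((μ₂.rnDeriv ρ x).toReal : ℂ) * Complex.exp (Complex.I * t * x))
          + Complex.I * (((μ₃.rnDeriv ρ x).toReal : ℂ) * Complex.exp (Complex.I * t * x))
          - Complex.I * (((μ₄.rnDeriv ρ x).toReal : ℂ) * Complex.exp (Complex.I * t * x)) := by
      funext x
      rw [hfdef]
      ring
    rw [e1]
    rw [integral_sub, integral_add, integral_sub, integral_const_mul, integral_const_mul]
    · rw [wiener_rn_int μ₁ ρ hac1 t, wiener_rn_int μ₂ ρ hac2 t, wiener_rn_int μ₃ ρ hac3 t,
        wiener_rn_int μ₄ ρ hac4 t, hF t]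
    · exact wiener_rn_intble μ₁ ρ t
    · exact wiener_rn_intble μ₂ ρ t
    · exact ((wiener_rn_intble μ₁ ρ t).sub (wiener_rn_intble μ₂ ρ t))
    · exact (wiener_rn_intble μ₃ ρ t).const_mul _
    · exact (((wiener_rn_intble μ₁ ρ t).sub (wiener_rn_intble μ₂ ρ t)).add
        ((wiener_rn_intble μ₃ ρ t).const_mul _))
    · exact (wiener_rn_intble μ₄ ρ t).const_mul _
  have hsing : ∀ (ν : Measure ℝ) [IsFiniteMeasure ν], ν ≪ ρ → ∀ E : ℝ,
      (ν {E}).toReal = (ν.rnDeriv ρ E).toReal * (ρ {E}).toReal := by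
    intro ν hν hac E
    haveI := hν
    haveI : ν.HaveLebesgueDecomposition ρ :=
      @Measure.haveLebesgueDecomposition_of_sigmaFinite _ _ ν ρ inferInstance
        (@IsFiniteMeasure.toSigmaFinite _ _ ρ hρfin)
    rw [← Measure.setLIntegral_rnDeriv hac {E}, lintegral_singleton, ENNReal.toReal_mul]
  have hatom : ∀ E : ℝ, μ {E} = (ρ {E}).toReal • f E := by
    intro E
    rw [hμ {E}, hsing μ₁ hac1 E, hsing μ₂ hac2 E, hsing μ₃ hac3 E, hsing μ₄ hac4 E, hfdef]
    rw [Complex.real_smul]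
    push_cast
    ring
  have := wiener_aux ρ f hfm hfi F hFrep
  have htsum : (∑' E : ℝ, ‖μ {E}‖ ^ 2) = ∑' E : ℝ, ‖(ρ {E}).toReal • f E‖ ^ 2 :=
    tsum_congr fun E => by rw [hatom E]
  rw [htsum]
  exact this
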